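/- Let p and q be distinct primes, C a cyclic group of order p^n, Q a nontrivial elementary abelian q-group, and G = Q ⋊ C. Suppose the image of C in Aut(Q) has order p^k and C^{p^{k-1}} acts on Q without nonzero fixed points. Then G has no element of order p^{n-k+1}·q. -/

import Mathlib

/-- Let `p ≠ q` be primes, `C` a cyclic group of order `p^n`, `Q` a nontrivial elementary
abelian `q`-group, and `G = Q ⋊ C` (via `φ : C →* Aut Q`). If the image of `C` in `Aut Q`
has order `p^k` and `C^{p^{k-1}}` acts on `Q` without nontrivial fixed points, then `G` has
no element of order `p^{n-k+1}·q`. -/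
theorem stmt_14 (p q n k : ℕ) (hp : p.Prime) (hq : q.Prime) (hpq : p ≠ q)
    (C Q : Type*) [Group C] [CommGroup Q] [Nontrivial Q]
    (hC : IsCyclic C) (hCcard : Nat.card C = p ^ n)
    (hQ : ∀ x : Q, x ^ q = 1)
    (φ : C →* MulAut Q)
    (hrange : Nat.card φ.range = p ^ k)
    (hfix : ∀ c : C, φ (c ^ p ^ (k - 1)) ≠ 1 →
      ∀ x : Q, x ≠ 1 → φ (c ^ p ^ (k - 1)) x ≠ x) :
    ∀ g : Q ⋊[φ] C, orderOf g ≠ p ^ (n - k + 1) * q := by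
  intro g hg
  have hp1 : 1 < p := hp.one_lt
  have hfinC : Finite C := Nat.finite_of_card_ne_zero (by
    rw [hCcard]; exact pow_ne_zero _ hp.pos.ne')
  set c : C := g.right with hc
  -- order of c divides orderOf g and p^n
  have hdvd1 : orderOf c ∣ orderOf g := by
    have := orderOf_map_dvd (SemidirectProduct.rightHom (φ := φ)) g
    simpa using this
  have hdvd2 : orderOf c ∣ p ^ n := hCcard ▸ orderOf_dvd_natCard c
  obtain ⟨m, hmn, hcm⟩ := (Nat.dvd_prime_pow hp).mp hdvd2
  -- g^(orderOf c) lies in Q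
  have hright : (g ^ orderOf c).right = 1 := by
    have : (g ^ orderOf c).right = c ^ orderOf c := by
      have : (SemidirectProduct.rightHom (g ^ orderOf c) : C) = SemidirectProduct.rightHom g ^ orderOf c := map_pow _ _ _
      simp [SemidirectProduct.rightHom] at this; exact this
    rw [this, pow_orderOf_eq_one]
  have hinl : g ^ orderOf c = SemidirectProduct.inl (g ^ orderOf c).left := by
    ext <;> simp [hright]
  -- hence orderOf g ∣ orderOf c * q
  have hdvd3 : orderOf g ∣ orderOf c * q := by
    apply orderOf_dvd_of_pow_eq_one
    rw [pow_mul, hinl, ← map_pow, hQ, map_one]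
  -- p^(n-k+1) ∣ p^m
  have h1 : p ^ (n - k + 1) ∣ p ^ m := by
    have : p ^ (n - k + 1) * q ∣ p ^ m * q := by rw [← hg, ← hcm]; exact hdvd3
    exact (Nat.mul_dvd_mul_iff_right hq.pos).mp this
  -- p^m ∣ p^(n-k+1)
  have h2 : p ^ m ∣ p ^ (n - k + 1) := by
    have hco : (p ^ m).Coprime q := Nat.Coprime.pow_left _
      ((Nat.coprime_primes hp hq).mpr hpq)
    exact (Nat.Coprime.dvd_of_dvd_mul_right hco) (hg ▸ hcm ▸ hdvd1)
  have hm : m = n - k + 1 := le_antisymm ((Nat.pow_dvd_pow_iff_le_right hp1).mp h2)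
    ((Nat.pow_dvd_pow_iff_le_right hp1).mp h1)
  -- k ≤ n via card of range dividing card C
  have hcardeq : Nat.card C = Nat.card φ.range * Nat.card φ.ker := by
    rw [Subgroup.card_eq_card_quotient_mul_card_subgroup φ.ker,
      Nat.card_congr (QuotientGroup.quotientKerEquivRange φ).toEquiv]
  have hkn : p ^ k ∣ p ^ n := ⟨Nat.card φ.ker, by rw [← hCcard, hcardeq, hrange]⟩
  have hkn' : k ≤ n := (Nat.pow_dvd_pow_iff_le_right hp1).mp hkn
  have hk1 : 1 ≤ k := by
    by_contra h
    have : k = 0 := by omega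
    subst this
    simp only [Nat.sub_zero] at hm
    omega
  -- card of the kernel
  have hker_card : Nat.card φ.ker = p ^ (n - k) := by
    have heq : p ^ k * Nat.card φ.ker = p ^ n := by
      rw [← hrange, ← hcardeq, hCcard]
    have heq2 : p ^ k * Nat.card φ.ker = p ^ k * p ^ (n - k) := by
      rw [heq, ← pow_add]
      congr 1
      omega
    exact Nat.eq_of_mul_eq_mul_left (pow_pos hp.pos k) heq2
  -- φ c ≠ 1
  have hphic : φ c ≠ 1 := by
    intro h
    have hmem : c ∈ φ.ker := h
    have := hker_card ▸ φ.ker.orderOf_dvd_natCard hmem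
    rw [hcm, hm] at this
    have := (Nat.pow_dvd_pow_iff_le_right hp1).mp this
    omega
  -- the Q-component of g ^ orderOf c
  set y : Q := (g ^ orderOf c).left with hy
  have hy1 : y ≠ 1 := by
    intro h
    have hgN : g ^ orderOf c = 1 := by rw [hinl, h, map_one]
    have := orderOf_dvd_of_pow_eq_one hgN
    rw [hg, hcm] at this
    rw [← hm] at this
    have hle := Nat.le_of_dvd (by positivity) this
    nlinarith [hq.two_le, pow_pos hp.pos m]
  -- y is fixed by φ c
  have hfixy : φ c y = y := by
    have hcomm : g * g ^ orderOf c = g ^ orderOf c * g := Commute.self_pow g _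
    have hl := congrArg SemidirectProduct.left hcomm
    simp only [SemidirectProduct.mul_left, hright, map_one, MulAut.one_apply] at hl
    have : g.left * φ c y = g.left * y := by
      rw [hl, mul_comm]
    exact mul_left_cancel this
  -- write c as a p^(k-1)-th power
  obtain ⟨g0, hg0⟩ := hC.exists_generator
  have hog0 : orderOf g0 = p ^ n := by
    rw [orderOf_eq_card_of_forall_mem_zpowers hg0, hCcard]
  obtain ⟨t, ht⟩ : ∃ t : ℕ, g0 ^ t = c := by
    have := hg0 c
    rwa [← mem_powers_iff_mem_zpowers, Submonoid.mem_powers_iff] at this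
  have horder : p ^ n / Nat.gcd (p ^ n) t = p ^ m := by
    rw [← hog0, ← orderOf_pow, ht, hcm]
  have hgcd : Nat.gcd (p ^ n) t = p ^ (k - 1) := by
    have hdvd : Nat.gcd (p ^ n) t ∣ p ^ n := Nat.gcd_dvd_left _ _
    have h1' : p ^ m * Nat.gcd (p ^ n) t = p ^ n := by
      rw [← horder, Nat.div_mul_cancel hdvd]
    have h2' : p ^ m * p ^ (k - 1) = p ^ n := by
      rw [← pow_add]; congr 1; omega
    exact Nat.eq_of_mul_eq_mul_left (by positivity) (h1'.trans h2'.symm)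
  obtain ⟨u, hu⟩ : p ^ (k - 1) ∣ t := hgcd ▸ Nat.gcd_dvd_right _ _
  have hd : (g0 ^ u) ^ p ^ (k - 1) = c := by
    rw [← pow_mul, mul_comm, ← hu, ht]
  exact hfix (g0 ^ u) (hd ▸ hphic) y hy1 (hd ▸ hfixy)
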